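/- Let D be a finite set, Δ ⊆ D, and r a natural number with |Δ| ≥ r + 2. Let X be a set of r-tuples over D that is invariant under every permutation g of D that fixes every element of D∖Δ and restricts to an even permutation of Δ (i.e., u ∈ X implies g∘u ∈ X for all such g). Suppose u, v : {1,…,r} → D satisfy: (i) for every i, u(i) ∈ Δ if and only if v(i) ∈ Δ; (ii) for every i with u(i) ∉ Δ, u(i) = v(i); and (iii) for all i, j: u(i) = u(j) if and only if v(i) = v(j). Then u ∈ X if and only if v ∈ X. -/

import Mathlib

open Equiv

lemma stmt_10_aux (D : Type) [Fintype D] [DecidableEq D] (Δ : Finset D) (r : ℕ)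
    (hcard : r + 2 ≤ Δ.card) (u v : Fin r → D)
    (h1 : ∀ i : Fin r, u i ∈ Δ ↔ v i ∈ Δ)
    (h3 : ∀ i j : Fin r, u i = u j ↔ v i = v j) :
    ∃ (g : Equiv.Perm D) (hg : ∀ x : D, x ∈ Δ ↔ g x ∈ Δ),
      (∀ x ∉ Δ, g x = x) ∧ g.subtypePerm (fun x => (hg x).symm) ∈ alternatingGroup {x // x ∈ Δ} ∧
      ∀ i : Fin r, u i ∈ Δ → g (u i) = v i := by
  classical
  set β := {x : D // x ∈ Δ} with hβ
  have hcardβ : Fintype.card β = Δ.card := Fintype.card_coe Δ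
  set pS : β → Prop := fun b => ∃ i, u i = (b : D) with hpS
  set pT : β → Prop := fun b => ∃ i, v i = (b : D) with hpT
  -- the bijection between u-values and v-values inside Δ
  have hvmem : ∀ (b : {b : β // pS b}), v (Classical.choose b.2) ∈ Δ := by
    rintro ⟨⟨x, hx⟩, hb⟩
    have hcs := Classical.choose_spec hb
    refine (h1 _).1 ?_
    rw [hcs]
    exact hx
  set f1 : {b : β // pS b} → {b : β // pT b} :=
    fun b => ⟨⟨v (Classical.choose b.2), hvmem b⟩, ⟨Classical.choose b.2, rfl⟩⟩ with hf1
  have hf1bij : Function.Bijective f1 := by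
    constructor
    · rintro ⟨⟨x, hx⟩, hb⟩ ⟨⟨y, hy⟩, hb'⟩ heq
      have e1 := Classical.choose_spec hb
      have e2 := Classical.choose_spec hb'
      have : v (Classical.choose hb) = v (Classical.choose hb') :=
        congrArg (fun z : {b : β // pT b} => ((z : β) : D)) heq
      have := (h3 _ _).2 this
      simp only [e1, e2] at this
      exact Subtype.ext (Subtype.ext this)
    · rintro ⟨⟨t, ht⟩, i, hi⟩
      have hui : u i ∈ Δ := (h1 i).2 (hi ▸ ht)
      refine ⟨⟨⟨u i, hui⟩, ⟨i, rfl⟩⟩, ?_⟩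
      have hsp : u (Classical.choose (⟨i, rfl⟩ : ∃ j, u j = u i)) = u i :=
        Classical.choose_spec (⟨i, rfl⟩ : ∃ j, u j = u i)
      have : v (Classical.choose (⟨i, rfl⟩ : ∃ j, u j = u i)) = v i := (h3 _ _).1 hsp
      exact Subtype.ext (Subtype.ext (by simp [hf1, this, hi]))
  set e1 : {b : β // pS b} ≃ {b : β // pT b} := Equiv.ofBijective f1 hf1bij with he1
  have hcards : Fintype.card {b : β // ¬ pS b} = Fintype.card {b : β // ¬ pT b} := by
    have h := Fintype.card_congr e1
    have hS := Fintype.card_subtype_compl pS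
    have hT := Fintype.card_subtype_compl pT
    rw [hS, hT, h]
  set e2 : {b : β // ¬ pS b} ≃ {b : β // ¬ pT b} := Fintype.equivOfCardEq hcards with he2
  set σ0 : Equiv.Perm β :=
    (Equiv.sumCompl pS).symm.trans ((e1.sumCongr e2).trans (Equiv.sumCompl pT)) with hσ0
  have hσ0key : ∀ (i : Fin r) (h : u i ∈ Δ), ((σ0 ⟨u i, h⟩ : β) : D) = v i := by
    intro i h
    have hps : pS ⟨u i, h⟩ := ⟨i, rfl⟩
    have : σ0 ⟨u i, h⟩ = ((e1 ⟨⟨u i, h⟩, hps⟩ : {b : β // pT b}) : β) := by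
      simp [hσ0, Equiv.sumCompl_symm_apply_of_pos hps]
    rw [this]
    have hsp : u (Classical.choose hps) = u i := Classical.choose_spec hps
    have : v (Classical.choose hps) = v i := (h3 _ _).1 hsp
    simp [he1, hf1, Equiv.ofBijective_apply, this]
  have hσ0T : ∀ (i : Fin r) (h : u i ∈ Δ), pT (σ0 ⟨u i, h⟩) := by
    intro i h
    exact ⟨i, ((hσ0key i h).symm : _)⟩
  -- find two points of Δ outside the v-values
  set Tfin : Finset β := Finset.univ.filter pT with hTfin
  have hTcard : Tfin.card ≤ r := by
    rcases Nat.eq_zero_or_pos r with hr | hr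
    · subst hr
      have : Tfin = ∅ := by
        ext b; simp [hTfin, hpT]
      simp [this]
    · have hne : Nonempty (Fin r) := ⟨⟨0, hr⟩⟩
      have hβne : Nonempty β := by
        have : 0 < Δ.card := by omega
        obtain ⟨x, hx⟩ := Finset.card_pos.1 this
        exact ⟨⟨x, hx⟩⟩
      obtain ⟨b0⟩ := hβne
      set f : Fin r → β := fun i => if h : v i ∈ Δ then ⟨v i, h⟩ else b0 with hfdef
      have hsub : Tfin ⊆ Finset.univ.image f := by
        intro b hb
        simp only [hTfin, Finset.mem_filter, hpT] at hb
        obtain ⟨-, i, hi⟩ := hb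
        have : v i ∈ Δ := hi ▸ b.2
        refine Finset.mem_image.2 ⟨i, Finset.mem_univ _, ?_⟩
        simp only [hfdef, dif_pos this]
        exact Subtype.ext hi
      calc Tfin.card ≤ (Finset.univ.image f).card := Finset.card_le_card hsub
        _ ≤ (Finset.univ : Finset (Fin r)).card := Finset.card_image_le
        _ = r := by simp
  have h2compl : 2 ≤ Tfinᶜ.card := by
    have := Finset.card_compl Tfin
    have hβc : Fintype.card β = Δ.card := hcardβ
    omega
  obtain ⟨a, ha, b, hb, hab⟩ := Finset.one_lt_card.1 (by omega : 1 < Tfinᶜ.card)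
  have haT : ¬ pT a := by simpa [hTfin] using Finset.mem_compl.1 ha
  have hbT : ¬ pT b := by simpa [hTfin] using Finset.mem_compl.1 hb
  -- fix parity
  set σ : Equiv.Perm β := if Equiv.Perm.sign σ0 = 1 then σ0 else Equiv.swap a b * σ0 with hσ
  have hσsign : Equiv.Perm.sign σ = 1 := by
    rcases Int.units_eq_one_or (Equiv.Perm.sign σ0) with h | h
    · simp [hσ, h]
    · simp [hσ, h, Equiv.Perm.sign_swap hab]
  have hσkey : ∀ (i : Fin r) (h : u i ∈ Δ), ((σ ⟨u i, h⟩ : β) : D) = v i := by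
    intro i h
    by_cases hs : Equiv.Perm.sign σ0 = 1
    · simp only [hσ, if_pos hs]; exact hσ0key i h
    · simp only [hσ, if_neg hs, Equiv.Perm.mul_apply]
      have hmem := hσ0T i h
      have hna : σ0 ⟨u i, h⟩ ≠ a := fun hc => haT (hc ▸ hmem)
      have hnb : σ0 ⟨u i, h⟩ ≠ b := fun hc => hbT (hc ▸ hmem)
      rw [Equiv.swap_apply_of_ne_of_ne hna hnb]
      exact hσ0key i h
  -- extend to D
  set g : Equiv.Perm D := σ.extendDomain (Equiv.refl β) with hg0
  have hgΔ : ∀ x (h : x ∈ Δ), g x = ((σ ⟨x, h⟩ : β) : D) := by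
    intro x h
    rw [hg0, Equiv.Perm.extendDomain_apply_subtype σ (Equiv.refl β) h]
    rfl
  have hgfix : ∀ x ∉ Δ, g x = x := by
    intro x hx
    exact Equiv.Perm.extendDomain_apply_not_subtype σ (Equiv.refl β) hx
  have hg : ∀ x : D, x ∈ Δ ↔ g x ∈ Δ := by
    intro x
    constructor
    · intro h; rw [hgΔ x h]; exact (σ ⟨x, h⟩).2
    · intro h
      by_contra hx
      rw [hgfix x hx] at h
      exact hx h
  refine ⟨g, hg, hgfix, ?_, ?_⟩
  · have heq : g.subtypePerm (fun x => (hg x).symm) = σ := by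
      ext x
      have : g (x : D) = ((σ x : β) : D) := by
        rw [hgΔ (x : D) x.2]
      simpa [Equiv.Perm.subtypePerm_apply, Subtype.ext_iff] using this
    rw [Equiv.Perm.mem_alternatingGroup, heq]
    exact hσsign
  · intro i h
    rw [hgΔ (u i) h]
    exact hσkey i h

/-- Let D be a finite set, Δ ⊆ D, and r with |Δ| ≥ r + 2. Let X be a set
of r-tuples over D invariant under every permutation g of D that fixes every element of
D∖Δ and restricts to an even permutation of Δ. Suppose u, v : {1,…,r} → D satisfy:
(i) u(i) ∈ Δ ↔ v(i) ∈ Δ for every i; (ii) u(i) = v(i) whenever u(i) ∉ Δ; and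
(iii) u(i) = u(j) ↔ v(i) = v(j) for all i, j. Then u ∈ X ↔ v ∈ X. -/
theorem stmt_10 (D : Type) [Fintype D] [DecidableEq D] (Δ : Finset D) (r : ℕ)
    (hcard : r + 2 ≤ Δ.card)
    (X : Set (Fin r → D))
    (hX : ∀ (g : Equiv.Perm D) (hg : ∀ x : D, x ∈ Δ ↔ g x ∈ Δ),
      (∀ x ∉ Δ, g x = x) →
      g.subtypePerm (fun x => (hg x).symm) ∈ alternatingGroup {x // x ∈ Δ} →
      ∀ u ∈ X, (fun i => g (u i)) ∈ X)
    (u v : Fin r → D)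
    (h1 : ∀ i : Fin r, u i ∈ Δ ↔ v i ∈ Δ)
    (h2 : ∀ i : Fin r, u i ∉ Δ → u i = v i)
    (h3 : ∀ i j : Fin r, u i = u j ↔ v i = v j) :
    u ∈ X ↔ v ∈ X := by
  constructor
  · intro hu
    obtain ⟨g, hg, hfix, heven, hkey⟩ := stmt_10_aux D Δ r hcard u v h1 h3
    have := hX g hg hfix heven u hu
    convert this using 1
    funext i
    by_cases h : u i ∈ Δ
    · exact (hkey i h).symm
    · rw [hfix (u i) h]; exact (h2 i h).symm
  · intro hv
    obtain ⟨g, hg, hfix, heven, hkey⟩ := stmt_10_aux D Δ r hcard v u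
      (fun i => (h1 i).symm) (fun i j => (h3 i j).symm)
    have := hX g hg hfix heven v hv
    convert this using 1
    funext i
    by_cases h : v i ∈ Δ
    · exact (hkey i h).symm
    · rw [hfix (v i) h]
      exact h2 i (fun hu => h ((h1 i).1 hu))
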